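/- Let O be a complete discrete valuation ring with residue field F, E its fraction field, and let V be a 2-dimensional E-vector space with a continuous action of a group G via ρ : G → GL₂(O) (with respect to a chosen basis e₁, e₂). Let T = O e₁ ⊕ O e₂ and W = V/T. Suppose the image of the inertia-like subgroup I ≤ G under ρ is topologically generated by ρ(g) where, for some A = [[a,b],[c,d]] ∈ SL₂(E), A ρ(g) A⁻¹ = [[1,1],[0,1]], and at least one of c, d is a unit in O. Then W^I = { [x,y]ᵗ + T : x, y ∈ E, cx + dy ∈ O }, and W^I is isomorphic as an O-module to E/O; in particular W^I is a divisible O-module. -/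

import Mathlib

open Matrix

section

variable (O : Type*) [CommRing O] [IsDomain O] [IsDiscreteValuationRing O]
  (E : Type*) [Field E] [Algebra O E] [IsFractionRing O E]

/-- The standard lattice `T = O e₁ ⊕ O e₂` inside `V = E²`. -/
noncomputable def latticeT : Submodule O (Fin 2 → E) :=
  Submodule.pi Set.univ fun _ => LinearMap.range (Algebra.linearMap O E)

/-- The `O`-linear action of a matrix `M ∈ M₂(O)` on `V = E²`. -/
noncomputable def matAction (M : Matrix (Fin 2) (Fin 2) O) :
    (Fin 2 → E) →ₗ[O] (Fin 2 → E) :=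
  ((M.map (algebraMap O E)).mulVecLin).restrictScalars O

set_option linter.unusedSectionVars false in
lemma latticeT_stable (M : Matrix (Fin 2) (Fin 2) O) :
    latticeT O E ≤ (latticeT O E).comap (matAction O E M) := by
  intro v hv
  intro i _
  simp only [matAction, LinearMap.coe_restrictScalars, Matrix.mulVecLin_apply,
    Matrix.mulVec, dotProduct, Matrix.map_apply]
  apply Submodule.sum_mem
  intro j _
  obtain ⟨x, hx⟩ := hv j (Set.mem_univ j)
  exact ⟨M i j * x, by simp [← hx, Algebra.linearMap_apply, _root_.map_mul]⟩

/-- The induced `O`-linear action of `M ∈ M₂(O)` on `W = V/T = (E/O)²`. -/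
noncomputable def quotAction (M : Matrix (Fin 2) (Fin 2) O) :
    ((Fin 2 → E) ⧸ latticeT O E) →ₗ[O] ((Fin 2 → E) ⧸ latticeT O E) :=
  Submodule.mapQ _ _ (matAction O E M) (latticeT_stable O E M)

/-- The fixed points `W^I` of the (topologically cyclic) inertia action generated by
the action of `M` on `W`. -/
noncomputable def quotFixed (M : Matrix (Fin 2) (Fin 2) O) :
    Submodule O ((Fin 2 → E) ⧸ latticeT O E) :=
  LinearMap.ker (quotAction O E M - LinearMap.id)

end

section Aux

variable {O : Type*} [CommRing O] [IsDomain O]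
  {E : Type*} [Field E] [Algebra O E] [IsFractionRing O E]

set_option linter.unusedSectionVars false in
lemma mul_mem_rangeAux (t : O) {x : E}
    (hx : x ∈ LinearMap.range (Algebra.linearMap O E)) :
    algebraMap O E t * x ∈ LinearMap.range (Algebra.linearMap O E) := by
  rw [← Algebra.smul_def]
  exact Submodule.smul_mem _ _ hx

lemma unit_divAux {u : O} (hu : IsUnit u) {x : E}
    (hx : algebraMap O E u * x ∈ LinearMap.range (Algebra.linearMap O E)) :
    x ∈ LinearMap.range (Algebra.linearMap O E) := by
  obtain ⟨w, rfl⟩ := hu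
  have h : x = algebraMap O E (↑w⁻¹ : O) * (algebraMap O E (↑w : O) * x) := by
    rw [← mul_assoc, ← RingHom.map_mul, Units.inv_mul, _root_.map_one, one_mul]
  rw [h]
  exact mul_mem_rangeAux _ hx

lemma equiv_aux [IsDiscreteValuationRing O]
    (Q : Submodule O ((Fin 2 → E) ⧸ latticeT O E))
    (c d : E) (c₀ d₀ : O) (hc : algebraMap O E c₀ = c) (hd : algebraMap O E d₀ = d)
    (hdu : IsUnit d₀) (i j : Fin 2) (hij : j ≠ i)
    (hcov : ∀ k : Fin 2, k = i ∨ k = j)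
    (hQ : ∀ v : Fin 2 → E, Submodule.Quotient.mk v ∈ Q ↔
      c * v i + d * v j ∈ LinearMap.range (Algebra.linearMap O E)) :
    Nonempty (↥Q ≃ₗ[O] (E ⧸ LinearMap.range (Algebra.linearMap O E))) := by
  set R := LinearMap.range (Algebra.linearMap O E) with hR
  have hdne : d ≠ 0 := by
    rw [← hd]
    simp only [ne_eq, map_eq_zero_iff _ (IsFractionRing.injective O E)]
    exact hdu.ne_zero
  let φ : (Fin 2 → E) →ₗ[O] E := (LinearMap.proj i : (Fin 2 → E) →ₗ[E] E).restrictScalars O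
  have hφ : latticeT O E ≤ R.comap φ := fun v hv => hv i (Set.mem_univ i)
  let ψ := Submodule.mapQ (latticeT O E) R φ hφ
  have hψmk : ∀ v : Fin 2 → E, ψ (Submodule.Quotient.mk v) = Submodule.Quotient.mk (v i) :=
    fun v => rfl
  let f := ψ ∘ₗ Q.subtype
  have hinj : Function.Injective f := by
    rw [← LinearMap.ker_eq_bot, LinearMap.ker_eq_bot']
    intro x hx
    obtain ⟨v, hv⟩ := Submodule.Quotient.mk_surjective (latticeT O E) x.1
    have hx' : ψ (Submodule.Quotient.mk v) = 0 := by rw [hv]; exact hx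
    rw [hψmk] at hx'
    have hvi : v i ∈ R := (Submodule.Quotient.mk_eq_zero _).mp hx'
    have hs : c * v i + d * v j ∈ R := (hQ v).mp (by rw [hv]; exact x.2)
    have hvj : v j ∈ R := by
      refine unit_divAux hdu ?_
      rw [hd]
      have h : d * v j = (c * v i + d * v j) - c * v i := by ring
      rw [h]
      exact sub_mem hs (by rw [← hc]; exact mul_mem_rangeAux _ hvi)
    have hvT : v ∈ latticeT O E := by
      intro k _
      rcases hcov k with rfl | rfl
      · exact hvi
      · exact hvj
    have hz : Submodule.Quotient.mk v = (0 : (Fin 2 → E) ⧸ latticeT O E) :=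
      (Submodule.Quotient.mk_eq_zero _).mpr hvT
    exact Subtype.ext (hv ▸ hz)
  have hsurj : Function.Surjective f := by
    intro y
    obtain ⟨e, rfl⟩ := Submodule.Quotient.mk_surjective R y
    set v : Fin 2 → E := fun k => if k = i then e else -(c * e) / d with hvdef
    have hvi : v i = e := if_pos rfl
    have hvj : v j = -(c * e) / d := if_neg hij
    have hmem : Submodule.Quotient.mk v ∈ Q := by
      rw [hQ v, hvi, hvj, mul_div_assoc', mul_comm d, mul_div_assoc, div_self hdne]
      simp
    refine ⟨⟨Submodule.Quotient.mk v, hmem⟩, ?_⟩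
    show ψ (Submodule.Quotient.mk v) = _
    rw [hψmk, hvi]
  exact ⟨LinearEquiv.ofBijective f ⟨hinj, hsurj⟩⟩

end Aux

theorem quotFixed_description_and_divisible
    (O : Type*) [CommRing O] [IsDomain O] [IsDiscreteValuationRing O]
    [IsAdicComplete (IsLocalRing.maximalIdeal O) O]
    (E : Type*) [Field E] [Algebra O E] [IsFractionRing O E]
    (M : Matrix (Fin 2) (Fin 2) O)
    (A : Matrix (Fin 2) (Fin 2) E) (hA : A.det = 1)
    (hconj : A * M.map (algebraMap O E) * A⁻¹ = !![1, 1; 0, 1])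
    (c₀ d₀ : O) (hc₀ : algebraMap O E c₀ = A 1 0) (hd₀ : algebraMap O E d₀ = A 1 1)
    (hunit : IsUnit c₀ ∨ IsUnit d₀) :
    (∀ v : Fin 2 → E,
      Submodule.Quotient.mk v ∈ quotFixed O E M ↔
        A 1 0 * v 0 + A 1 1 * v 1 ∈ LinearMap.range (Algebra.linearMap O E)) ∧
    Nonempty (↥(quotFixed O E M) ≃ₗ[O] (E ⧸ LinearMap.range (Algebra.linearMap O E))) ∧
    (∀ r : O, r ≠ 0 → ∀ w ∈ quotFixed O E M, ∃ w' ∈ quotFixed O E M, r • w' = w) := by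
  classical
  set R := LinearMap.range (Algebra.linearMap O E) with hR
  have hu : IsUnit A.det := by rw [hA]; exact isUnit_one
  have hdet : A 0 0 * A 1 1 - A 0 1 * A 1 0 = 1 := by rw [← Matrix.det_fin_two]; exact hA
  have hAinv : A⁻¹ = !![A 1 1, -(A 0 1); -(A 1 0), A 0 0] := by
    rw [Matrix.inv_def, hA, Matrix.adjugate_fin_two]
    simp
  have hN : M.map (algebraMap O E) =
      !![1 + A 1 0 * A 1 1, A 1 1 * A 1 1; -(A 1 0 * A 1 0), 1 - A 1 0 * A 1 1] := by
    have h1 : M.map (algebraMap O E) = A⁻¹ * (!![1,1;0,1] * A) := by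
      rw [← hconj, Matrix.nonsing_inv_mul_cancel_right _ _ hu,
        Matrix.nonsing_inv_mul_cancel_left _ _ hu]
    rw [h1, hAinv, Matrix.eta_fin_two A, Matrix.mul_fin_two, Matrix.mul_fin_two]
    ext i j
    fin_cases i <;> fin_cases j <;>
      simp only [Fin.mk_zero, Fin.mk_one, Matrix.cons_val_zero, Matrix.cons_val_one,
        Matrix.head_cons, Matrix.head_fin_const, Matrix.cons_val', Matrix.empty_val',
        Matrix.cons_val_fin_one, Matrix.of_apply, Fin.isValue] <;>
      first | ring1 | linear_combination hdet
  have hcoord : ∀ v : Fin 2 → E, (matAction O E M) v - v =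
      ![A 1 1 * (A 1 0 * v 0 + A 1 1 * v 1), -(A 1 0 * (A 1 0 * v 0 + A 1 1 * v 1))] := by
    intro v
    funext k
    fin_cases k <;>
      simp [matAction, hN, Matrix.mulVecLin_apply, Matrix.mulVec, dotProduct,
        Fin.sum_univ_two] <;> ring
  have hlat : ∀ w : Fin 2 → E, w ∈ latticeT O E ↔ (w 0 ∈ R ∧ w 1 ∈ R) := by
    intro w
    rw [latticeT, Submodule.mem_pi]
    constructor
    · intro h; exact ⟨h 0 trivial, h 1 trivial⟩
    · rintro ⟨h0, h1⟩ k _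
      fin_cases k
      · exact h0
      · exact h1
  have hmem : ∀ v : Fin 2 → E, Submodule.Quotient.mk v ∈ quotFixed O E M ↔
      (A 1 1 * (A 1 0 * v 0 + A 1 1 * v 1) ∈ R ∧ A 1 0 * (A 1 0 * v 0 + A 1 1 * v 1) ∈ R) := by
    intro v
    rw [quotFixed, LinearMap.mem_ker, LinearMap.sub_apply, LinearMap.id_apply]
    have h2 : (quotAction O E M) (Submodule.Quotient.mk v) =
        Submodule.Quotient.mk ((matAction O E M) v) := rfl
    rw [h2, ← Submodule.Quotient.mk_sub, Submodule.Quotient.mk_eq_zero, hcoord v, hlat]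
    simp [neg_mem_iff]
  have hch : ∀ v : Fin 2 → E, Submodule.Quotient.mk v ∈ quotFixed O E M ↔
      A 1 0 * v 0 + A 1 1 * v 1 ∈ R := by
    intro v
    rw [hmem]
    constructor
    · rintro ⟨h1, h2⟩
      rcases hunit with hcu | hdu
      · exact unit_divAux hcu (by rw [hc₀]; exact h2)
      · exact unit_divAux hdu (by rw [hd₀]; exact h1)
    · intro hs
      constructor
      · have h := mul_mem_rangeAux d₀ hs
        rwa [hd₀] at h
      · have h := mul_mem_rangeAux c₀ hs
        rwa [hc₀] at h
  have hiso : Nonempty (↥(quotFixed O E M) ≃ₗ[O] (E ⧸ R)) := by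
    rcases hunit with hcu | hdu
    · exact equiv_aux (quotFixed O E M) (A 1 1) (A 1 0) d₀ c₀ hd₀ hc₀ hcu 1 0 (by decide)
        (by decide) (fun v => (hch v).trans (by rw [add_comm (A 1 0 * v 0)]))
    · exact equiv_aux (quotFixed O E M) (A 1 0) (A 1 1) c₀ d₀ hc₀ hd₀ hdu 0 1 (by decide)
        (by decide) hch
  refine ⟨hch, hiso, ?_⟩
  obtain ⟨f⟩ := hiso
  intro r hr w hw
  have hre : algebraMap O E r ≠ 0 := by
    simp only [ne_eq, map_eq_zero_iff _ (IsFractionRing.injective O E)]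
    exact hr
  obtain ⟨e, he⟩ := Submodule.Quotient.mk_surjective R (f ⟨w, hw⟩)
  set z' : E ⧸ R := Submodule.Quotient.mk (e / algebraMap O E r) with hz'
  have hrz : r • z' = f ⟨w, hw⟩ := by
    rw [hz', ← he, ← Submodule.Quotient.mk_smul]
    congr 1
    rw [Algebra.smul_def, mul_div_cancel₀ _ hre]
  refine ⟨(f.symm z' : _), (f.symm z').2, ?_⟩
  have h3 : r • f.symm z' = (⟨w, hw⟩ : quotFixed O E M) := by
    rw [← _root_.map_smul, hrz, LinearEquiv.symm_apply_apply]
  calc r • (f.symm z' : (Fin 2 → E) ⧸ latticeT O E)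
      = ((r • f.symm z' : quotFixed O E M) : _) := rfl
    _ = w := by rw [h3]
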